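/- In Y_{d,n}^aff(q), for each i = 1,...,n-1 and all integers a, b with a ≥ b: g_i X_i^a X_{i+1}^b = X_i^b X_{i+1}^a g_i - (q - q^{-1}) e_i Σ_{k=0}^{a-b-1} X_i^{b+k} X_{i+1}^{a-k}; and for a ≤ b: g_i X_i^a X_{i+1}^b = X_i^b X_{i+1}^a g_i + (q - q^{-1}) e_i Σ_{k=0}^{b-a-1} X_i^{a+k} X_{i+1}^{b-k}. -/

import Mathlib

open LaurentPolynomial Finset

noncomputable section

/-- The ring `R = ℂ[q, q⁻¹]` of Laurent polynomials over `ℂ`. -/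
abbrev Rq := LaurentPolynomial ℂ

/-- The indeterminate `q`. -/
def qq : Rq := T 1

/-- `q⁻¹`. -/
def qqinv : Rq := T (-1)

/-- The transposition `s_i = (i, i+1)` acting on the index `j`. -/
def sAdj (i j : ℕ) : ℕ := if j = i then i + 1 else if j = i + 1 then i else j

/-- The transposition `s_{i,l} = (i, l)` acting on the index `j`. -/
def sTrp (i l j : ℕ) : ℕ := if j = i then l else if j = l then i else j

/-- A realisation of the defining presentation of the affine Yokonuma--Hecke
algebra `Y_{d,n}^aff(q)` inside an `R`-algebra `A`:  elements
`t_1, …, t_n`, `g_1, …, g_{n-1}`, `X_1, X_1⁻¹` (together with the derived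
elements `X_2, …, X_n` given by `X_{i+1} = g_i X_i g_i` and their inverses)
satisfying the defining relations (br1), (br2), (fr1)–(fr3), (aff1)–(aff3)
and (quad). -/
structure YHAff (A : Type*) [Ring A] [Algebra Rq A] (d n : ℕ) where
  t : ℕ → A
  g : ℕ → A
  X : ℕ → A
  Xinv : ℕ → A
  br1 : ∀ i j, 1 ≤ i → i ≤ n - 1 → 1 ≤ j → j ≤ n - 1 → (i + 1 < j ∨ j + 1 < i) →
    g i * g j = g j * g i
  br2 : ∀ i, 1 ≤ i → i ≤ n - 2 → g i * g (i + 1) * g i = g (i + 1) * g i * g (i + 1)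
  fr1 : ∀ i j, 1 ≤ i → i ≤ n → 1 ≤ j → j ≤ n → t i * t j = t j * t i
  fr2 : ∀ i j, 1 ≤ i → i ≤ n - 1 → 1 ≤ j → j ≤ n → g i * t j = t (sAdj i j) * g i
  fr3 : ∀ j, 1 ≤ j → j ≤ n → t j ^ d = 1
  aff1 : X 1 * (g 1 * X 1 * g 1) = g 1 * X 1 * g 1 * X 1
  aff2 : ∀ i, 2 ≤ i → i ≤ n - 1 → X 1 * g i = g i * X 1
  aff3 : ∀ j, 1 ≤ j → j ≤ n → X 1 * t j = t j * X 1
  quad : ∀ i, 1 ≤ i → i ≤ n - 1 → g i ^ 2 =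
    1 + algebraMap Rq A (qq - qqinv) *
      (algebraMap Rq A (C (d : ℂ)⁻¹) * ∑ k ∈ range d, t i ^ k * t (i + 1) ^ (d - k)) * g i
  Xrec : ∀ i, 1 ≤ i → i ≤ n - 1 → X (i + 1) = g i * X i * g i
  XXinv : ∀ i, 1 ≤ i → i ≤ n → X i * Xinv i = 1
  XinvX : ∀ i, 1 ≤ i → i ≤ n → Xinv i * X i = 1

variable {A : Type*} [Ring A] [Algebra Rq A] {d n : ℕ}

/-- The idempotent `e_i = (1/d) ∑_{k=0}^{d-1} t_i^k t_{i+1}^{d-k}`. -/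
def YHAff.e (Y : YHAff A d n) (i : ℕ) : A :=
  algebraMap Rq A (C (d : ℂ)⁻¹) * ∑ k ∈ range d, Y.t i ^ k * Y.t (i + 1) ^ (d - k)

/-- The idempotent `e_{i,l} = (1/d) ∑_{k=0}^{d-1} t_i^k t_l^{d-k}`. -/
def YHAff.eil (Y : YHAff A d n) (i l : ℕ) : A :=
  algebraMap Rq A (C (d : ℂ)⁻¹) * ∑ k ∈ range d, Y.t i ^ k * Y.t l ^ (d - k)

/-- The scalar `q - q⁻¹` viewed inside `A`. -/
def cq (A : Type*) [Ring A] [Algebra Rq A] : A := algebraMap Rq A (qq - qqinv)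

/-- `X_i^a` for `a : ℤ`, via `Xinv` for negative exponents. -/
def YHAff.zp (Y : YHAff A d n) (i : ℕ) (a : ℤ) : A :=
  if 0 ≤ a then Y.X i ^ a.toNat else Y.Xinv i ^ (-a).toNat


section Aux

variable {A : Type*} [Ring A] [Algebra Rq A] {d n : ℕ}

lemma zf {A : Type*} [Semigroup A] {p q r s : A} (h : p * q = r * s) (z : A) :
    p * (q * z) = r * (s * z) := by rw [← mul_assoc, h, mul_assoc]

lemma sAdj_self (i : ℕ) : sAdj i i = i + 1 := by simp [sAdj]

lemma sAdj_succ (i : ℕ) : sAdj i (i + 1) = i := by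
  unfold sAdj; rw [if_neg (by omega), if_pos rfl]

lemma sAdj_sAdj (i j : ℕ) : sAdj i (sAdj i j) = j := by
  unfold sAdj; split_ifs <;> omega

lemma sAdj_ge {i j : ℕ} (hi : 1 ≤ i) (h : 1 ≤ j) : 1 ≤ sAdj i j := by
  unfold sAdj; split_ifs <;> omega

lemma sAdj_le {i j n : ℕ} (hi : i + 1 ≤ n) (h : j ≤ n) : sAdj i j ≤ n := by
  unfold sAdj; split_ifs <;> omega

lemma tX (Y : YHAff A d n) : ∀ m, 1 ≤ m → m ≤ n → ∀ j, 1 ≤ j → j ≤ n →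
    Y.X m * Y.t j = Y.t j * Y.X m := by
  intro m hm
  induction m, hm using Nat.le_induction with
  | base => exact fun _ j hj1 hj2 => Y.aff3 j hj1 hj2
  | succ m hm ih =>
    intro hmn j hj1 hj2
    have hm1 : m ≤ n - 1 := by omega
    have hj1' : 1 ≤ sAdj m j := sAdj_ge hm hj1
    have hj2' : sAdj m j ≤ n := sAdj_le (by omega) hj2
    have hs := Y.fr2 m j hm hm1 hj1 hj2
    have hs2 := Y.fr2 m (sAdj m j) hm hm1 hj1' hj2'
    rw [sAdj_sAdj] at hs2
    have hx := ih (by omega) (sAdj m j) hj1' hj2'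
    rw [Y.Xrec m hm hm1]
    simp only [mul_assoc]
    rw [hs, zf hx, zf hs2]

lemma gXhigh (Y : YHAff A d n) : ∀ m, 1 ≤ m → ∀ j, m < j → j ≤ n - 1 →
    Y.g j * Y.X m = Y.X m * Y.g j := by
  intro m hm
  induction m, hm using Nat.le_induction with
  | base => exact fun j hj hj2 => (Y.aff2 j hj hj2).symm
  | succ m hm ih =>
    intro j hj hj2
    have hm1 : m ≤ n - 1 := by omega
    have hgg : Y.g j * Y.g m = Y.g m * Y.g j :=
      Y.br1 j m (by omega) hj2 hm hm1 (Or.inr (by omega))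
    have hgx := ih j (by omega) hj2
    rw [Y.Xrec m hm hm1]
    simp only [mul_assoc]
    rw [zf hgg, zf hgx, hgg]

lemma XXadj (Y : YHAff A d n) : ∀ m, 1 ≤ m → m ≤ n - 1 →
    Y.X m * Y.X (m + 1) = Y.X (m + 1) * Y.X m := by
  intro m hm
  induction m, hm using Nat.le_induction with
  | base =>
    intro h2
    rw [Y.Xrec 1 le_rfl h2]
    exact Y.aff1
  | succ m hm ih =>
    intro h2
    have hm1 : m ≤ n - 1 := by omega
    have hm2 : m ≤ n - 2 := by omega
    have hXm1 : Y.X (m + 1) = Y.g m * Y.X m * Y.g m := Y.Xrec m hm hm1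
    have hXm2 : Y.X (m + 1 + 1) = Y.g (m + 1) * Y.X (m + 1) * Y.g (m + 1) :=
      Y.Xrec (m + 1) (by omega) h2
    have hbr : ∀ z : A, Y.g m * (Y.g (m + 1) * (Y.g m * z))
        = Y.g (m + 1) * (Y.g m * (Y.g (m + 1) * z)) := by
      intro z
      rw [show Y.g m * (Y.g (m + 1) * (Y.g m * z)) = (Y.g m * Y.g (m + 1) * Y.g m) * z by
        simp only [mul_assoc], Y.br2 m hm hm2]
      simp only [mul_assoc]
    have hbr0 : Y.g (m + 1) * (Y.g m * Y.g (m + 1)) = Y.g m * (Y.g (m + 1) * Y.g m) := by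
      rw [← mul_assoc, ← mul_assoc]
      exact (Y.br2 m hm hm2).symm
    have hxbE : Y.g (m + 1) * Y.X m = Y.X m * Y.g (m + 1) := gXhigh Y m hm (m + 1) (by omega) h2
    have hxb : ∀ z : A, Y.X m * (Y.g (m + 1) * z) = Y.g (m + 1) * (Y.X m * z) := zf hxbE.symm
    have hbx : ∀ z : A, Y.g (m + 1) * (Y.X m * z) = Y.X m * (Y.g (m + 1) * z) := zf hxbE
    have ihe := ih hm1
    rw [hXm1] at ihe
    have hih : ∀ z : A, Y.X m * (Y.g m * (Y.X m * (Y.g m * z)))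
        = Y.g m * (Y.X m * (Y.g m * (Y.X m * z))) := by
      intro z
      rw [show Y.X m * (Y.g m * (Y.X m * (Y.g m * z)))
          = (Y.X m * (Y.g m * Y.X m * Y.g m)) * z by simp only [mul_assoc], ihe]
      simp only [mul_assoc]
    rw [hXm2, hXm1]
    simp only [mul_assoc]
    conv_lhs => rw [hbr, hbx, hbr0, hxb, hih, hbr, hbx]
    conv_rhs => rw [hbr, hbx]

lemma ge_comm (Y : YHAff A d n) (i : ℕ) (h1 : 1 ≤ i) (h2 : i ≤ n - 1) :
    Y.g i * Y.e i = Y.e i * Y.g i := by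
  have hin : i ≤ n := by omega
  have hi1n : i + 1 ≤ n := by omega
  have hgt1 : Y.g i * Y.t i = Y.t (i + 1) * Y.g i := by
    have h := Y.fr2 i i h1 h2 h1 hin
    rwa [sAdj_self] at h
  have hgt2 : Y.g i * Y.t (i + 1) = Y.t i * Y.g i := by
    have h := Y.fr2 i (i + 1) h1 h2 (by omega) hi1n
    rwa [sAdj_succ] at h
  have hgtp1 : ∀ k : ℕ, Y.g i * (Y.t i) ^ k = (Y.t (i + 1)) ^ k * Y.g i := by
    intro k
    induction k with
    | zero => simp
    | succ k ih => rw [pow_succ, pow_succ, ← mul_assoc, ih, mul_assoc, hgt1, ← mul_assoc]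
  have hgtp2 : ∀ k : ℕ, Y.g i * (Y.t (i + 1)) ^ k = (Y.t i) ^ k * Y.g i := by
    intro k
    induction k with
    | zero => simp
    | succ k ih => rw [pow_succ, pow_succ, ← mul_assoc, ih, mul_assoc, hgt2, ← mul_assoc]
  unfold YHAff.e
  rw [← mul_assoc, (Algebra.commutes _ (Y.g i)).symm, mul_assoc, mul_assoc]
  congr 1
  rw [Finset.mul_sum, Finset.sum_mul]
  have hterm : ∀ k : ℕ, Y.g i * (Y.t i ^ k * Y.t (i + 1) ^ (d - k))
      = Y.t (i + 1) ^ k * Y.t i ^ (d - k) * Y.g i := by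
    intro k
    rw [← mul_assoc, hgtp1, mul_assoc, hgtp2, ← mul_assoc]
  simp only [hterm]
  rw [← Finset.sum_mul, ← Finset.sum_mul]
  congr 1
  have hc : Commute (Y.t i) (Y.t (i + 1)) := Y.fr1 i (i + 1) h1 hin (by omega) hi1n
  refine Finset.sum_nbij' (fun k => if k = 0 then 0 else d - k)
    (fun k => if k = 0 then 0 else d - k) ?_ ?_ ?_ ?_ ?_ <;> intro k hk <;>
    simp only [mem_range] at * <;> [skip; skip; skip; skip; skip]
  · split_ifs <;> omega
  · split_ifs <;> omega
  · split_ifs <;> omega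
  · split_ifs <;> omega
  · by_cases h0 : k = 0
    · subst h0
      simp [Y.fr3 i h1 hin, Y.fr3 (i + 1) (by omega) hi1n]
    · rw [if_neg h0, show d - (d - k) = k by omega]
      exact hc.symm.pow_pow k (d - k)

lemma e_comm_of (Y : YHAff A d n) (i : ℕ) {z : A} (h1 : Commute z (Y.t i))
    (h2 : Commute z (Y.t (i + 1))) : Commute z (Y.e i) := by
  unfold YHAff.e
  refine Commute.mul_right ?_ ?_
  · exact (Algebra.commutes _ z).symm
  · exact Commute.sum_right _ _ _ fun k _ => (h1.pow_right k).mul_right (h2.pow_right (d - k))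

/-- `X j` as a unit. -/
def YHAff.uX (Y : YHAff A d n) (j : ℕ) (hj1 : 1 ≤ j) (hj2 : j ≤ n) : Aˣ :=
  ⟨Y.X j, Y.Xinv j, Y.XXinv j hj1 hj2, Y.XinvX j hj1 hj2⟩

lemma YHAff.zp_eq (Y : YHAff A d n) (j : ℕ) (hj1 : 1 ≤ j) (hj2 : j ≤ n) (a : ℤ) :
    Y.zp j a = ((Y.uX j hj1 hj2 ^ a : Aˣ) : A) := by
  rcases le_or_gt 0 a with h | h
  · obtain ⟨m, rfl⟩ : ∃ m : ℕ, a = (m : ℤ) := ⟨a.toNat, by omega⟩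
    rw [YHAff.zp, if_pos h, zpow_natCast]
    simp [YHAff.uX]
  · obtain ⟨m, rfl⟩ : ∃ m : ℕ, a = -(m : ℤ) := ⟨(-a).toNat, by omega⟩
    rw [YHAff.zp, if_neg (by omega), zpow_neg, zpow_natCast, ← inv_pow, neg_neg,
      Int.toNat_natCast, Units.val_pow_eq_pow_val]
    rfl

end Aux

/-- Lemma 1 of Chlouveraki–Sécherre: the formulas for `g_i X_i^a X_{i+1}^b`
with integer exponents `a, b`. -/
theorem stmt12 {A : Type*} [Ring A] [Algebra Rq A] {d n : ℕ} (hd : 0 < d)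
    (Y : YHAff A d n) (i : ℕ) (h1 : 1 ≤ i) (h2 : i ≤ n - 1) (a b : ℤ) :
    (a ≥ b → Y.g i * (Y.zp i a * Y.zp (i + 1) b) =
      Y.zp i b * Y.zp (i + 1) a * Y.g i -
        cq A * Y.e i * ∑ k ∈ range (a - b).toNat,
          Y.zp i (b + k) * Y.zp (i + 1) (a - k)) ∧
    (a ≤ b → Y.g i * (Y.zp i a * Y.zp (i + 1) b) =
      Y.zp i b * Y.zp (i + 1) a * Y.g i +
        cq A * Y.e i * ∑ k ∈ range (b - a).toNat,
          Y.zp i (a + k) * Y.zp (i + 1) (b - k)) := by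
  have hn2 : 2 ≤ n := by omega
  have hin : i ≤ n := by omega
  have hi1 : 1 ≤ i + 1 := by omega
  have hi1n : i + 1 ≤ n := by omega
  set g := Y.g i with hgdef
  set e := Y.e i with hedef
  set c := cq A with hcdef
  set x := Y.X i with hxdef
  set y := Y.X (i + 1) with hydef
  have hcent : ∀ z : A, c * z = z * c := fun z => Algebra.commutes _ z
  have hxt : ∀ j, 1 ≤ j → j ≤ n → Commute x (Y.t j) := fun j hj1 hj2 => tX Y i h1 hin j hj1 hj2
  have hyt : ∀ j, 1 ≤ j → j ≤ n → Commute y (Y.t j) := fun j hj1 hj2 =>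
    tX Y (i + 1) hi1 hi1n j hj1 hj2
  have hex : Commute x e := e_comm_of Y i (hxt i h1 hin) (hxt (i + 1) hi1 hi1n)
  have hey : Commute y e := e_comm_of Y i (hyt i h1 hin) (hyt (i + 1) hi1 hi1n)
  have hxyE : x * y = y * x := XXadj Y i h1 h2
  have hxy : Commute x y := hxyE
  have hge : g * e = e * g := ge_comm Y i h1 h2
  have hyd : y = g * x * g := Y.Xrec i h1 h2
  have hq : g * g = 1 + c * e * g := by
    have hq0 := Y.quad i h1 h2
    rw [pow_two] at hq0
    exact hq0
  have hgg' : g * (g - c * e) = 1 := by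
    have hce : g * (c * e) = c * e * g := by
      rw [← mul_assoc, ← hcent g, mul_assoc, hge, ← mul_assoc]
    rw [mul_sub, hq, hce, add_sub_cancel_right]
  have hgx : g * x = y * g - c * (e * y) := by
    have hxg : g * x = y * (g - c * e) := by
      rw [hyd, mul_assoc, hgg', mul_one]
    rw [hxg, mul_sub]
    congr 1
    rw [← mul_assoc, ← hcent y, mul_assoc, hey.eq]
  have hgy : g * y = x * g + c * (e * y) := by
    have key : g * (g * x * g) = x * g + c * (e * (g * x * g)) := by
      calc g * (g * x * g) = (g * g) * (x * g) := by simp only [mul_assoc]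
        _ = 1 * (x * g) + (c * e * g) * (x * g) := by rw [hq, add_mul]
        _ = x * g + c * (e * (g * x * g)) := by rw [one_mul]; simp only [mul_assoc]
    conv_lhs => rw [hyd]
    rw [key, ← hyd]
  have LA : ∀ m : ℕ, g * x ^ m = y ^ m * g - c * e * ∑ k ∈ range m, x ^ k * y ^ (m - k) := by
    intro m
    induction m with
    | zero => simp
    | succ m ih =>
      have hSx : (∑ k ∈ range m, x ^ k * y ^ (m - k)) * x
          = ∑ k ∈ range m, x ^ (k + 1) * y ^ (m - k) := by
        rw [sum_mul]
        refine sum_congr rfl fun k hk => ?_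
        rw [mul_assoc, (hxy.symm.pow_left (m - k)).eq, ← mul_assoc, ← pow_succ]
      have hmove : y ^ m * (c * (e * y)) = c * e * y ^ (m + 1) := by
        calc y ^ m * (c * (e * y)) = c * (y ^ m * (e * y)) := by
              rw [← mul_assoc, ← hcent (y ^ m), mul_assoc]
          _ = c * (e * (y ^ m * y)) := by rw [zf (hey.pow_left m).eq]
          _ = c * e * y ^ (m + 1) := by rw [← pow_succ, ← mul_assoc]
      calc g * x ^ (m + 1) = (g * x ^ m) * x := by rw [pow_succ, ← mul_assoc]
        _ = (y ^ m * g) * x - c * e * ((∑ k ∈ range m, x ^ k * y ^ (m - k)) * x) := by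
              rw [ih, sub_mul, mul_assoc (c * e)]
        _ = y ^ m * (g * x) - c * e * ∑ k ∈ range m, x ^ (k + 1) * y ^ (m - k) := by
              rw [mul_assoc, hSx]
        _ = y ^ m * (y * g) - c * e * y ^ (m + 1)
              - c * e * ∑ k ∈ range m, x ^ (k + 1) * y ^ (m - k) := by
              rw [hgx, mul_sub, hmove]
        _ = y ^ (m + 1) * g - c * e * ∑ k ∈ range (m + 1), x ^ k * y ^ (m + 1 - k) := by
              rw [sum_range_succ']
              simp only [pow_zero, one_mul, Nat.sub_zero, Nat.succ_sub_succ]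
              rw [mul_add, ← mul_assoc, ← pow_succ]
              abel
  have LB : ∀ m : ℕ, g * y ^ m = x ^ m * g + c * e * ∑ k ∈ range m, x ^ k * y ^ (m - k) := by
    intro m
    induction m with
    | zero => simp
    | succ m ih =>
      have hSy : (∑ k ∈ range m, x ^ k * y ^ (m - k)) * y
          = ∑ k ∈ range m, x ^ k * y ^ (m + 1 - k) := by
        rw [sum_mul]
        refine sum_congr rfl fun k hk => ?_
        rw [mul_assoc, ← pow_succ, show m - k + 1 = m + 1 - k by
          have := mem_range.mp hk; omega]
      have hmove : x ^ m * (c * (e * y)) = c * e * (x ^ m * y) := by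
        calc x ^ m * (c * (e * y)) = c * (x ^ m * (e * y)) := by
              rw [← mul_assoc, ← hcent (x ^ m), mul_assoc]
          _ = c * (e * (x ^ m * y)) := by rw [zf (hex.pow_left m).eq]
          _ = c * e * (x ^ m * y) := by rw [← mul_assoc]
      calc g * y ^ (m + 1) = (g * y ^ m) * y := by rw [pow_succ, ← mul_assoc]
        _ = (x ^ m * g) * y + c * e * ((∑ k ∈ range m, x ^ k * y ^ (m - k)) * y) := by
              rw [ih, add_mul, mul_assoc (c * e)]
        _ = x ^ m * (g * y) + c * e * ∑ k ∈ range m, x ^ k * y ^ (m + 1 - k) := by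
              rw [mul_assoc, hSy]
        _ = x ^ m * (x * g) + c * e * (x ^ m * y)
              + c * e * ∑ k ∈ range m, x ^ k * y ^ (m + 1 - k) := by
              rw [hgy, mul_add, hmove]
        _ = x ^ (m + 1) * g + c * e * ∑ k ∈ range (m + 1), x ^ k * y ^ (m + 1 - k) := by
              rw [sum_range_succ, show m + 1 - m = 1 by omega, pow_one]
              rw [mul_add, ← mul_assoc, ← pow_succ]
              abel
  -- units
  have huXY : Y.uX i h1 hin * Y.uX (i + 1) hi1 hi1n = Y.uX (i + 1) hi1 hi1n * Y.uX i h1 hin := by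
    apply Units.ext
    simp only [Units.val_mul]
    exact hxyE
  have huXYc : Commute (Y.uX i h1 hin) (Y.uX (i + 1) hi1 hi1n) := huXY
  set uZ : Aˣ := Y.uX i h1 hin * Y.uX (i + 1) hi1 hi1n with hZdef
  have hgZ0 : g * (x * y) = (x * y) * g := by
    calc g * (x * y) = (g * x * g) * (x * g) := by
          rw [hyd]; simp only [mul_assoc]
      _ = y * (x * g) := by rw [← hyd]
      _ = (y * x) * g := by rw [mul_assoc]
      _ = (x * y) * g := by rw [hxyE]
  have hgZ : Commute g ((uZ : Aˣ) : A) := hgZ0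
  have heZ : Commute e ((uZ : Aˣ) : A) := hex.symm.mul_right hey.symm
  have hgZp : ∀ b0 : ℤ, Commute g (((uZ ^ b0 : Aˣ)) : A) := fun b0 => hgZ.units_zpow_right b0
  have heZp : ∀ b0 : ℤ, Commute e (((uZ ^ b0 : Aˣ)) : A) := fun b0 => heZ.units_zpow_right b0
  have hcZp : ∀ b0 : ℤ, Commute (c * e) (((uZ ^ b0 : Aˣ)) : A) := fun b0 =>
    Commute.mul_left (hcent _) (heZp b0)
  have hmerge : ∀ (b0 : ℤ) (s t : ℕ), Y.zp i (b0 + s) * Y.zp (i + 1) (b0 + t)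
      = ((uZ ^ b0 : Aˣ) : A) * (x ^ s * y ^ t) := by
    intro b0 s t
    rw [Y.zp_eq i h1 hin, Y.zp_eq (i + 1) hi1 hi1n]
    have hc2 : Commute ((Y.uX i h1 hin) ^ (s : ℤ)) ((Y.uX (i + 1) hi1 hi1n) ^ (b0 : ℤ)) :=
      huXYc.zpow_zpow _ _
    have huu : (Y.uX i h1 hin) ^ (b0 + (s : ℤ)) * (Y.uX (i + 1) hi1 hi1n) ^ (b0 + (t : ℤ))
        = uZ ^ b0 * ((Y.uX i h1 hin) ^ (s : ℤ) * (Y.uX (i + 1) hi1 hi1n) ^ (t : ℤ)) := by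
      rw [zpow_add, zpow_add, hZdef, huXYc.mul_zpow b0]
      simp only [mul_assoc]
      rw [zf hc2.eq]
    rw [← Units.val_mul, huu, Units.val_mul, Units.val_mul, zpow_natCast, zpow_natCast,
      Units.val_pow_eq_pow_val, Units.val_pow_eq_pow_val]
    rfl
  constructor
  · intro hab
    have hab' : b ≤ a := hab
    have ham : a = b + ((a - b).toNat : ℤ) := by omega
    set m : ℕ := (a - b).toNat with hmdef
    have k1 : Y.zp i a * Y.zp (i + 1) b = ((uZ ^ b : Aˣ) : A) * x ^ m := by
      have h := hmerge b m 0
      simp only [Nat.cast_zero, add_zero, pow_zero, mul_one] at h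
      rwa [← ham] at h
    have k2 : Y.zp i b * Y.zp (i + 1) a = ((uZ ^ b : Aˣ) : A) * y ^ m := by
      have h := hmerge b 0 m
      simp only [Nat.cast_zero, add_zero, pow_zero, one_mul] at h
      rwa [← ham] at h
    have k3 : ∀ k ∈ range m, Y.zp i (b + (k : ℤ)) * Y.zp (i + 1) (a - (k : ℤ))
        = ((uZ ^ b : Aˣ) : A) * (x ^ k * y ^ (m - k)) := by
      intro k hk
      have hk' : k < m := mem_range.mp hk
      have h := hmerge b k (m - k)
      rwa [show b + ((m - k : ℕ) : ℤ) = a - (k : ℤ) by omega] at h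
    calc g * (Y.zp i a * Y.zp (i + 1) b)
        = g * (((uZ ^ b : Aˣ) : A) * x ^ m) := by rw [k1]
      _ = ((uZ ^ b : Aˣ) : A) * (g * x ^ m) := by
            rw [← mul_assoc, (hgZp b).eq, mul_assoc]
      _ = ((uZ ^ b : Aˣ) : A) * (y ^ m * g)
            - ((uZ ^ b : Aˣ) : A) * (c * e * ∑ k ∈ range m, x ^ k * y ^ (m - k)) := by
            rw [LA m, mul_sub]
      _ = Y.zp i b * Y.zp (i + 1) a * g
            - c * e * ∑ k ∈ range m, Y.zp i (b + (k : ℤ)) * Y.zp (i + 1) (a - (k : ℤ)) := by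
            congr 1
            · rw [← mul_assoc, ← k2]
            · rw [← mul_assoc, ← (hcZp b).eq, mul_assoc, mul_sum]
              congr 1
              exact sum_congr rfl fun k hk => (k3 k hk).symm
  · intro hab
    have ham : b = a + ((b - a).toNat : ℤ) := by omega
    set m : ℕ := (b - a).toNat with hmdef
    have k1 : Y.zp i a * Y.zp (i + 1) b = ((uZ ^ a : Aˣ) : A) * y ^ m := by
      have h := hmerge a 0 m
      simp only [Nat.cast_zero, add_zero, pow_zero, one_mul] at h
      rwa [← ham] at h
    have k2 : Y.zp i b * Y.zp (i + 1) a = ((uZ ^ a : Aˣ) : A) * x ^ m := by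
      have h := hmerge a m 0
      simp only [Nat.cast_zero, add_zero, pow_zero, mul_one] at h
      rwa [← ham] at h
    have k3 : ∀ k ∈ range m, Y.zp i (a + (k : ℤ)) * Y.zp (i + 1) (b - (k : ℤ))
        = ((uZ ^ a : Aˣ) : A) * (x ^ k * y ^ (m - k)) := by
      intro k hk
      have hk' : k < m := mem_range.mp hk
      have h := hmerge a k (m - k)
      rwa [show a + ((m - k : ℕ) : ℤ) = b - (k : ℤ) by omega] at h
    calc g * (Y.zp i a * Y.zp (i + 1) b)
        = g * (((uZ ^ a : Aˣ) : A) * y ^ m) := by rw [k1]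
      _ = ((uZ ^ a : Aˣ) : A) * (g * y ^ m) := by
            rw [← mul_assoc, (hgZp a).eq, mul_assoc]
      _ = ((uZ ^ a : Aˣ) : A) * (x ^ m * g)
            + ((uZ ^ a : Aˣ) : A) * (c * e * ∑ k ∈ range m, x ^ k * y ^ (m - k)) := by
            rw [LB m, mul_add]
      _ = Y.zp i b * Y.zp (i + 1) a * g
            + c * e * ∑ k ∈ range m, Y.zp i (a + (k : ℤ)) * Y.zp (i + 1) (b - (k : ℤ)) := by
            congr 1
            · rw [← mul_assoc, ← k2]
            · rw [← mul_assoc, ← (hcZp a).eq, mul_assoc, mul_sum]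
              congr 1
              exact sum_congr rfl fun k hk => (k3 k hk).symm
end
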